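/- Fix n ≥ 1 and permutations v, w in S_n. The polynomial σ_v(w) (computed from any reduced word for w) has nonnegative integer coefficients when expanded as a polynomial in the simple roots α_1, ..., α_{n−1}; that is, σ_v(w) lies in the subsemiring of ℤ[t_1, ..., t_n] generated over ℕ by α_1, ..., α_{n−1}. -/

import Mathlib

open Equiv MvPolynomial

/-- The adjacent transposition `s_i = (i, i+1)` in `S_n` (defined to be `1` if `i+1 ≥ n`). -/
def simpleRefl (n : ℕ) (i : ℕ) : Equiv.Perm (Fin n) :=
  if h : i + 1 < n then Equiv.swap ⟨i, Nat.lt_of_succ_lt h⟩ ⟨i + 1, h⟩ else 1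

/-- A word is a list of indices `i` with `i + 1 < n` (0-indexed version of `1 ≤ i ≤ n-1`). -/
def IsWord (n : ℕ) (l : List ℕ) : Prop := ∀ b ∈ l, b + 1 < n

/-- The product `s_{b_1} ⋯ s_{b_m}` of the simple reflections of a word. -/
def wordProd (n : ℕ) (l : List ℕ) : Equiv.Perm (Fin n) := (l.map (simpleRefl n)).prod

/-- `l` is a reduced word for `w`: its product is `w` and no shorter word has product `w`. -/
def IsReducedWord (n : ℕ) (w : Equiv.Perm (Fin n)) (l : List ℕ) : Prop :=
  IsWord n l ∧ wordProd n l = w ∧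
    ∀ l' : List ℕ, IsWord n l' → wordProd n l' = w → l.length ≤ l'.length

/-- The Coxeter length `ℓ(w)`: the length of any reduced word for `w`. -/
noncomputable def coxLen (n : ℕ) (w : Equiv.Perm (Fin n)) : ℕ :=
  sInf {m | ∃ l : List ℕ, IsWord n l ∧ wordProd n l = w ∧ l.length = m}

/-- Bruhat order: the partial order generated by `v < t * v` whenever `t` is a
transposition and `ℓ(v) < ℓ(t * v)`. -/
def BruhatLE (n : ℕ) : Equiv.Perm (Fin n) → Equiv.Perm (Fin n) → Prop :=
  Relation.ReflTransGen fun x y =>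
    (∃ t : Equiv.Perm (Fin n), t.IsSwap ∧ y = t * x) ∧ coxLen n x < coxLen n y

/-- The simple root `α_i = t_i - t_{i+1}` in `ℤ[t_1, …, t_n]` (defined as `0` if `i+1 ≥ n`). -/
noncomputable def simpleRoot (n : ℕ) (i : ℕ) : MvPolynomial (Fin n) ℤ :=
  if h : i + 1 < n then X ⟨i, Nat.lt_of_succ_lt h⟩ - X ⟨i + 1, h⟩ else 0

/-- The root `r_j = (s_{b_1} ⋯ s_{b_{j-1}}) · α_{b_j}` associated to position `j` of a word,
where `S_n` acts on polynomials by permuting variables. -/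
noncomputable def wordRoot (n : ℕ) (l : List ℕ) (j : Fin l.length) : MvPolynomial (Fin n) ℤ :=
  rename (⇑(wordProd n (l.take j))) (simpleRoot n (l.get j))

open scoped Classical in
/-- Billey's formula `σ_v(w)`, computed from the reduced word `l` of `w`: the sum over all
index sequences `j_1 < ⋯ < j_k` such that `(b_{j_1}, …, b_{j_k})` is a reduced word for `v`,
of the products `r_{j_1} ⋯ r_{j_k}`. -/
noncomputable def billey (n : ℕ) (v : Equiv.Perm (Fin n)) (l : List ℕ) :
    MvPolynomial (Fin n) ℤ :=
  ∑ J : Finset (Fin l.length),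
    if IsReducedWord n v ((J.sort (· ≤ ·)).map l.get) then ∏ j ∈ J, wordRoot n l j else 0


variable {n : ℕ}

def invNum (n : ℕ) (w : Perm (Fin n)) : ℕ :=
  (Finset.univ.filter fun p : Fin n × Fin n => p.1 < p.2 ∧ w p.2 < w p.1).card

lemma swap_val {i : ℕ} (h : i + 1 < n) (x : Fin n) :
    (Equiv.swap (⟨i, Nat.lt_of_succ_lt h⟩ : Fin n) ⟨i + 1, h⟩ x : ℕ)
      = if (x : ℕ) = i then i + 1 else if (x : ℕ) = i + 1 then i else x := by
  rw [Equiv.swap_apply_def]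
  split_ifs with h1 h2 h3 h4 h5 <;>
    simp_all [Fin.ext_iff] <;> omega

lemma swap_lt_swap {i : ℕ} (h : i + 1 < n) {x y : Fin n} (hxy : x < y)
    (hne : ¬((x : ℕ) = i ∧ (y : ℕ) = i + 1)) :
    Equiv.swap (⟨i, Nat.lt_of_succ_lt h⟩ : Fin n) ⟨i + 1, h⟩ x
      < Equiv.swap (⟨i, Nat.lt_of_succ_lt h⟩ : Fin n) ⟨i + 1, h⟩ y := by
  rw [Fin.lt_def, swap_val h, swap_val h]
  rw [Fin.lt_def] at hxy
  split_ifs <;> omega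

lemma invNum_key {i : ℕ} (h : i + 1 < n) (w : Perm (Fin n)) :
    invNum n (w * Equiv.swap (⟨i, Nat.lt_of_succ_lt h⟩ : Fin n) ⟨i + 1, h⟩)
        + (if w ⟨i + 1, h⟩ < w ⟨i, Nat.lt_of_succ_lt h⟩ then 1 else 0)
      = invNum n w + (if w ⟨i, Nat.lt_of_succ_lt h⟩ < w ⟨i + 1, h⟩ then 1 else 0) := by
  have hab : (⟨i, Nat.lt_of_succ_lt h⟩ : Fin n) < ⟨i + 1, h⟩ := by simp [Fin.lt_def]
  set a : Fin n := ⟨i, Nat.lt_of_succ_lt h⟩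
  set b : Fin n := ⟨i + 1, h⟩
  have hsa : Equiv.swap a b a = b := Equiv.swap_apply_left a b
  have hsb : Equiv.swap a b b = a := Equiv.swap_apply_right a b
  have hss : ∀ x : Fin n, Equiv.swap a b (Equiv.swap a b x) = x :=
    fun x => Equiv.swap_apply_self a b x
  have hvne : ∀ p : Fin n × Fin n, p.1 < p.2 → p ≠ (a, b) → ¬((p.1 : ℕ) = i ∧ (p.2 : ℕ) = i + 1) := by
    rintro ⟨x, y⟩ _ hp ⟨hx, hy⟩
    exact hp (Prod.ext (Fin.ext hx) (Fin.ext hy))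
  set A := (Finset.univ.filter fun p : Fin n × Fin n =>
    p.1 < p.2 ∧ (w * Equiv.swap a b) p.2 < (w * Equiv.swap a b) p.1) with hA
  set B := (Finset.univ.filter fun p : Fin n × Fin n => p.1 < p.2 ∧ w p.2 < w p.1) with hB
  have hAB : (A.erase (a, b)).card = (B.erase (a, b)).card := by
    apply Finset.card_nbij' (fun p => (Equiv.swap a b p.1, Equiv.swap a b p.2))
      (fun p => (Equiv.swap a b p.1, Equiv.swap a b p.2))
    · rintro ⟨x, y⟩ hp
      rw [Finset.mem_coe, Finset.mem_erase, hA, Finset.mem_filter] at hp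
      obtain ⟨hpne, -, hxy, hinv⟩ := hp
      have hlt := swap_lt_swap h hxy (hvne (x, y) hxy hpne)
      rw [Finset.mem_coe, Finset.mem_erase, hB, Finset.mem_filter]
      refine ⟨?_, Finset.mem_univ _, hlt, hinv⟩
      intro hcon
      have h1 : Equiv.swap a b x = a := congrArg Prod.fst hcon
      have h2 : Equiv.swap a b y = b := congrArg Prod.snd hcon
      have e1 : x = b := by rw [← hss x, h1, hsa]
      have e2 : y = a := by rw [← hss y, h2, hsb]
      rw [e1, e2] at hxy
      exact absurd hab (not_lt.mpr hxy.le)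
    · rintro ⟨x, y⟩ hp
      rw [Finset.mem_coe, Finset.mem_erase, hB, Finset.mem_filter] at hp
      obtain ⟨hpne, -, hxy, hinv⟩ := hp
      have hlt := swap_lt_swap h hxy (hvne (x, y) hxy hpne)
      rw [Finset.mem_coe, Finset.mem_erase, hA, Finset.mem_filter]
      constructor
      · intro hcon
        have h1 : Equiv.swap a b x = a := congrArg Prod.fst hcon
        have h2 : Equiv.swap a b y = b := congrArg Prod.snd hcon
        have e1 : x = b := by rw [← hss x, h1, hsa]
        have e2 : y = a := by rw [← hss y, h2, hsb]
        rw [e1, e2] at hxy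
        exact absurd hab (not_lt.mpr hxy.le)
      · refine ⟨Finset.mem_univ _, hlt, ?_⟩
        simpa [Perm.mul_apply, hss] using hinv
    · rintro ⟨x, y⟩ _; simp [hss]
    · rintro ⟨x, y⟩ _; simp [hss]
  have memA : (a, b) ∈ A ↔ w a < w b := by
    rw [hA, Finset.mem_filter]
    simp [hab, Perm.mul_apply, hsa, hsb]
  have memB : (a, b) ∈ B ↔ w b < w a := by
    rw [hB, Finset.mem_filter]; simp [hab]
  have hwab : w a ≠ w b := fun hcon => absurd (w.injective hcon) (ne_of_lt hab)
  have cardA : A.card = (A.erase (a, b)).card + (if w a < w b then 1 else 0) := by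
    by_cases hc : w a < w b
    · rw [if_pos hc, Finset.card_erase_add_one (memA.mpr hc)]
    · rw [if_neg hc, Finset.erase_eq_of_notMem (fun hm => hc (memA.mp hm)), Nat.add_zero]
  have cardB : B.card = (B.erase (a, b)).card + (if w b < w a then 1 else 0) := by
    by_cases hc : w b < w a
    · rw [if_pos hc, Finset.card_erase_add_one (memB.mpr hc)]
    · rw [if_neg hc, Finset.erase_eq_of_notMem (fun hm => hc (memB.mp hm)), Nat.add_zero]
  have htri : (if w a < w b then 1 else 0) + (if w b < w a then 1 else 0) = 1 := by
    rcases lt_or_gt_of_ne hwab with hc | hc <;> simp [hc, asymm hc]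
  show A.card + _ = B.card + _
  omega

lemma wordProd_append (l₁ l₂ : List ℕ) :
    wordProd n (l₁ ++ l₂) = wordProd n l₁ * wordProd n l₂ := by
  simp [wordProd, List.map_append, List.prod_append]

lemma invNum_one : invNum n 1 = 0 := by
  rw [invNum, Finset.card_eq_zero, Finset.filter_eq_empty_iff]
  rintro ⟨x, y⟩ -
  rintro ⟨h1, h2⟩
  exact absurd h1 (not_lt.mpr (le_of_lt h2))

lemma eq_one_of_no_descent (w : Perm (Fin n))
    (hw : ∀ (i : ℕ) (h : i + 1 < n), w ⟨i, Nat.lt_of_succ_lt h⟩ < w ⟨i + 1, h⟩) : w = 1 := by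
  match n with
  | 0 => exact Subsingleton.elim _ _
  | m + 1 =>
    have hsm : StrictMono w := by
      rw [Fin.strictMono_iff_lt_succ]
      intro i
      have := hw i.val (by omega)
      exact this
    have hsm' : StrictMono (w⁻¹ : Perm (Fin (m + 1))) := by
      intro x y hxy
      rw [← hsm.lt_iff_lt]
      simpa using hxy
    haveI : WellFoundedLT (Fin (m + 1)) := inferInstance
    ext x
    have h1 : x ≤ w x := hsm.le_apply
    have h2 : w x ≤ x := by
      have := hsm'.le_apply (x := w x)
      simpa using this
    exact congrArg Fin.val (le_antisymm h2 h1)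

lemma exists_word_invNum (w : Perm (Fin n)) :
    ∃ l : List ℕ, IsWord n l ∧ wordProd n l = w ∧ l.length = invNum n w := by
  have key : ∀ k : ℕ, ∀ w : Perm (Fin n), invNum n w = k →
      ∃ l : List ℕ, IsWord n l ∧ wordProd n l = w ∧ l.length = k := by
    intro k
    induction k using Nat.strong_induction_on with
    | _ k ih =>
      intro w hk
      by_cases hw : w = 1
      · subst hw
        rw [invNum_one] at hk
        exact ⟨[], fun b hb => absurd hb List.not_mem_nil, rfl, hk ▸ rfl⟩
      · have hdesc : ¬ ∀ (i : ℕ) (h : i + 1 < n),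
            w ⟨i, Nat.lt_of_succ_lt h⟩ < w ⟨i + 1, h⟩ :=
          fun hall => hw (eq_one_of_no_descent w hall)
        push_neg at hdesc
        obtain ⟨i, h, hnlt⟩ := hdesc
        have hne : w ⟨i, Nat.lt_of_succ_lt h⟩ ≠ w ⟨i + 1, h⟩ := by
          intro hcon
          have := w.injective hcon
          simp [Fin.ext_iff] at this
        have hdesc : w ⟨i + 1, h⟩ < w ⟨i, Nat.lt_of_succ_lt h⟩ :=
          lt_of_le_of_ne hnlt (fun hcon => hne hcon.symm)
        have hkey := invNum_key h w
        rw [if_pos hdesc, if_neg (asymm hdesc), Nat.add_zero] at hkey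
        set w' := w * Equiv.swap (⟨i, Nat.lt_of_succ_lt h⟩ : Fin n) ⟨i + 1, h⟩ with hw'
        have hlt : invNum n w' < k := by omega
        obtain ⟨l', hl'w, hl'p, hl'len⟩ := ih (invNum n w') hlt w' rfl
        refine ⟨l' ++ [i], ?_, ?_, ?_⟩
        · intro b hb
          rcases List.mem_append.mp hb with hb | hb
          · exact hl'w b hb
          · rw [List.mem_singleton] at hb; omega
        · rw [wordProd_append, hl'p]
          have : wordProd n [i] = simpleRefl n i := by simp [wordProd]
          rw [this, simpleRefl, dif_pos h, hw', mul_assoc, Equiv.swap_mul_self, mul_one]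
        · simp [hl'len]; omega
  exact key (invNum n w) w rfl

lemma invNum_le_and (l : List ℕ) (hw : IsWord n l) :
    invNum n (wordProd n l) ≤ l.length ∧
      (invNum n (wordProd n l) = l.length →
        ∀ (j : Fin l.length) (hb : l.get j + 1 < n),
          wordProd n (l.take j) ⟨l.get j, Nat.lt_of_succ_lt hb⟩
            < wordProd n (l.take j) ⟨l.get j + 1, hb⟩) := by
  induction l using List.reverseRecOn with
  | nil =>
    constructor
    · simp [wordProd, invNum_one]
    · intro _ j
      exact absurd j.2 (by simp)
  | append_singleton l b ih =>
    have hwl : IsWord n l := fun x hx => hw x (List.mem_append.mpr (Or.inl hx))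
    have hb : b + 1 < n := hw b (List.mem_append.mpr (Or.inr (List.mem_singleton_self b)))
    obtain ⟨ih1, ih2⟩ := ih hwl
    set u := wordProd n l with hu
    have hprod : wordProd n (l ++ [b]) = u * Equiv.swap (⟨b, Nat.lt_of_succ_lt hb⟩ : Fin n) ⟨b + 1, hb⟩ := by
      rw [wordProd_append]
      have : wordProd n [b] = simpleRefl n b := by simp [wordProd]
      rw [this, simpleRefl, dif_pos hb]
    have hkey := invNum_key hb u
    have hlen : (l ++ [b]).length = l.length + 1 := by simp
    have hite1 : (if u ⟨b + 1, hb⟩ < u ⟨b, Nat.lt_of_succ_lt hb⟩ then 1 else 0) ≤ 1 := by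
      split_ifs <;> omega
    have hite2 : (if u ⟨b, Nat.lt_of_succ_lt hb⟩ < u ⟨b + 1, hb⟩ then 1 else 0) ≤ 1 := by
      split_ifs <;> omega
    constructor
    · rw [hprod, hlen]; omega
    · intro heq j hbj
      rw [hprod, hlen] at heq
      have hinvu : invNum n u = l.length := by omega
      have hasc : u ⟨b, Nat.lt_of_succ_lt hb⟩ < u ⟨b + 1, hb⟩ := by
        by_contra hc
        rw [if_neg hc] at hkey
        omega
      have hjlt : j.val < l.length + 1 := by rw [← hlen]; exact j.2
      rcases Nat.lt_or_ge j.val l.length with hj | hj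
      · -- j is within l
        have htake : (l ++ [b]).take j.val = l.take j.val :=
          List.take_append_of_le_length (le_of_lt hj)
        have hget : (l ++ [b]).get j = l.get ⟨j.val, hj⟩ := by
          rw [List.get_eq_getElem, List.get_eq_getElem, List.getElem_append_left]
        simp only [htake, hget] at hbj ⊢
        exact ih2 hinvu ⟨j.val, hj⟩ hbj
      · -- j is the last position
        have hjval : j.val = l.length := by omega
        have htake : (l ++ [b]).take j.val = l := by
          rw [hjval, List.take_left]
        have hget : (l ++ [b]).get j = b := by
          rw [List.get_eq_getElem]
          simp [hjval]
        simp only [htake, hget] at hbj ⊢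
        exact hasc

lemma reduced_ascent {w : Perm (Fin n)} {l : List ℕ} (hl : IsReducedWord n w l)
    (j : Fin l.length) (hb : l.get j + 1 < n) :
    wordProd n (l.take j) ⟨l.get j, Nat.lt_of_succ_lt hb⟩
      < wordProd n (l.take j) ⟨l.get j + 1, hb⟩ := by
  obtain ⟨hword, hprod, hmin⟩ := hl
  obtain ⟨l₀, h0w, h0p, h0len⟩ := exists_word_invNum (n := n) w
  have hge : l.length ≤ invNum n w := by
    rw [← h0len]; exact hmin l₀ h0w h0p
  have hle := (invNum_le_and l hword).1
  rw [hprod] at hle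
  exact (invNum_le_and l hword).2 (by rw [hprod]; omega) j hb

lemma X_sub_X_mem {a b : Fin n} (hab : a < b) :
    (X a - X b : MvPolynomial (Fin n) ℤ) ∈
      Subsemiring.closure {p : MvPolynomial (Fin n) ℤ |
        ∃ i : ℕ, i + 1 < n ∧ p = simpleRoot n i} := by
  have key : ∀ k : ℕ, ∀ a b : Fin n, (b : ℕ) = (a : ℕ) + (k + 1) →
      (X a - X b : MvPolynomial (Fin n) ℤ) ∈
        Subsemiring.closure {p : MvPolynomial (Fin n) ℤ |
          ∃ i : ℕ, i + 1 < n ∧ p = simpleRoot n i} := by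
    intro k
    induction k with
    | zero =>
      intro a b hab
      apply Subsemiring.subset_closure
      refine ⟨a.val, by omega, ?_⟩
      rw [simpleRoot, dif_pos (show a.val + 1 < n by omega)]
      have e1 : (⟨a.val, Nat.lt_of_succ_lt (show a.val + 1 < n by omega)⟩ : Fin n) = a :=
        Fin.ext rfl
      have e2 : (⟨a.val + 1, show a.val + 1 < n by omega⟩ : Fin n) = b :=
        Fin.ext (show a.val + 1 = b.val by omega)
      rw [e1, e2]
    | succ k ih =>
      intro a b hab
      have hc : (a : ℕ) + 1 < n := by omega
      set c : Fin n := ⟨a.val + 1, hc⟩ with hcdef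
      have h1 : (X a - X c : MvPolynomial (Fin n) ℤ) ∈ _ :=
        Subsemiring.subset_closure (s := {p : MvPolynomial (Fin n) ℤ |
          ∃ i : ℕ, i + 1 < n ∧ p = simpleRoot n i}) ⟨a.val, hc, by
            rw [simpleRoot, dif_pos hc]⟩
      have h2 := ih c b (by simp [hcdef]; omega)
      have : (X a - X b : MvPolynomial (Fin n) ℤ) = (X a - X c) + (X c - X b) := by ring
      rw [this]
      exact Subsemiring.add_mem _ h1 h2
  have hk : (b : ℕ) = (a : ℕ) + ((b : ℕ) - (a : ℕ) - 1 + 1) := by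
    have := Fin.lt_def.mp hab; omega
  exact key ((b : ℕ) - (a : ℕ) - 1) a b hk

lemma wordRoot_mem {w : Perm (Fin n)} {l : List ℕ} (hl : IsReducedWord n w l)
    (j : Fin l.length) :
    wordRoot n l j ∈
      Subsemiring.closure {p : MvPolynomial (Fin n) ℤ |
        ∃ i : ℕ, i + 1 < n ∧ p = simpleRoot n i} := by
  have hb : l.get j + 1 < n := hl.1 (l.get j) (by
    rw [List.get_eq_getElem]; exact List.getElem_mem j.2)
  have hasc := reduced_ascent hl j hb
  rw [wordRoot, simpleRoot, dif_pos hb, map_sub, rename_X, rename_X]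
  exact X_sub_X_mem hasc

/-- `σ_v(w)` has nonnegative integer coefficients as a polynomial in the simple
roots: it lies in the subsemiring of `ℤ[t_1, …, t_n]` generated (over `ℕ`) by
`α_1, …, α_{n-1}`. -/
theorem billey_stmt_11 (n : ℕ) (hn : 1 ≤ n) (v w : Equiv.Perm (Fin n))
    (l : List ℕ) (hl : IsReducedWord n w l) :
    billey n v l ∈
      Subsemiring.closure {p : MvPolynomial (Fin n) ℤ |
        ∃ i : ℕ, i + 1 < n ∧ p = simpleRoot n i} := by
  rw [billey]
  apply Subsemiring.sum_mem
  intro J _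
  split_ifs
  · exact Subsemiring.prod_mem _ (fun j _ => wordRoot_mem hl j)
  · exact Subsemiring.zero_mem _
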